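/- The class of finite graphs of degree bound d that are D-doubling is hyperfinite: for every ε > 0 there exists K (depending only on ε, d, D) such that any finite D-doubling graph G of degree bound d admits deletion of at most ε|V(G)| edges leaving all components of size at most K. -/

import Mathlib

/-- The ball of radius `r` around `x` in the graph `G`. -/
def gball {V : Type*} (G : SimpleGraph V) (x : V) (r : ℕ) : Set V :=
  {y | G.Reachable x y ∧ G.dist x y ≤ r}

open scoped Classical

namespace DoublingHyp

variable {n : ℕ}

/-- Combinatorial ball of radius `r` around `x` inside the vertex set `R`. -/
noncomputable def ballB (G : SimpleGraph (Fin n)) (R : Finset (Fin n)) (x : Fin n) :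
    ℕ → Finset (Fin n)
  | 0 => {x}
  | r + 1 => ballB G R x r ∪ R.filter (fun y => ∃ z ∈ ballB G R x r, G.Adj z y)

lemma ballB_subset_succ (G : SimpleGraph (Fin n)) (R : Finset (Fin n)) (x : Fin n) (r : ℕ) :
    ballB G R x r ⊆ ballB G R x (r + 1) := by
  rw [ballB]; exact Finset.subset_union_left

lemma mem_ballB_self (G : SimpleGraph (Fin n)) (R : Finset (Fin n)) (x : Fin n) (r : ℕ) :
    x ∈ ballB G R x r := by
  induction r with
  | zero => simp [ballB]
  | succ r ih => exact ballB_subset_succ G R x r ih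

lemma ballB_subset (G : SimpleGraph (Fin n)) (R : Finset (Fin n)) (x : Fin n) (hx : x ∈ R) :
    ∀ r, ballB G R x r ⊆ R := by
  intro r; induction r with
  | zero => simpa [ballB] using hx
  | succ r ih =>
    rw [ballB]
    exact Finset.union_subset ih (Finset.filter_subset _ _)

lemma adj_mem_ballB {G : SimpleGraph (Fin n)} {R : Finset (Fin n)} {x v w : Fin n} {r : ℕ}
    (hv : v ∈ ballB G R x r) (hw : w ∈ R) (h : G.Adj v w) : w ∈ ballB G R x (r + 1) := by
  rw [ballB]
  exact Finset.mem_union_right _ (Finset.mem_filter.2 ⟨hw, v, hv, h⟩)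

lemma ballB_mem_gball {G : SimpleGraph (Fin n)} {R : Finset (Fin n)} {x y : Fin n} {r : ℕ}
    (hy : y ∈ ballB G R x r) : y ∈ gball G x r := by
  induction r generalizing y with
  | zero =>
    simp only [ballB, Finset.mem_singleton] at hy
    subst hy
    exact ⟨SimpleGraph.Reachable.refl _, by simp [SimpleGraph.dist_self]⟩
  | succ r ih =>
    rw [ballB, Finset.mem_union] at hy
    rcases hy with hy | hy
    · obtain ⟨h1, h2⟩ := ih hy
      exact ⟨h1, h2.trans (Nat.le_succ _)⟩
    · rw [Finset.mem_filter] at hy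
      obtain ⟨-, z, hz, hadj⟩ := hy
      obtain ⟨hreach, hdist⟩ := ih hz
      refine ⟨hreach.trans hadj.reachable, ?_⟩
      obtain ⟨p, hp⟩ := hreach.exists_walk_length_eq_dist
      calc G.dist x y ≤ (p.concat hadj).length := SimpleGraph.dist_le _
        _ = p.length + 1 := p.length_concat hadj
        _ ≤ r + 1 := by omega

lemma gball_mono (G : SimpleGraph (Fin n)) (x : Fin n) {r r' : ℕ} (h : r ≤ r') :
    gball G x r ⊆ gball G x r' := fun y hy => ⟨hy.1, hy.2.trans h⟩

/-- Growth bound from doubling. -/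
lemma gball_pow {d D : ℕ} (G : SimpleGraph (Fin n))
    (hd : ∀ v, (G.neighborSet v).ncard ≤ d)
    (hD : ∀ (x : Fin n) (s : ℕ), 1 ≤ s →
      (gball G x (2 * s)).ncard ≤ D * (gball G x s).ncard)
    (x : Fin n) : ∀ t : ℕ, (gball G x (2 ^ t)).ncard ≤ (d + 1) * D ^ t := by
  intro t; induction t with
  | zero =>
    have hsub : gball G x (2 ^ 0) ⊆ insert x (G.neighborSet x) := by
      intro y hy
      obtain ⟨h1, h2⟩ := hy
      rcases Nat.le_one_iff_eq_zero_or_eq_one.1 h2 with h0 | h0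
      · left; exact (h1.dist_eq_zero_iff.1 h0).symm
      · right; exact SimpleGraph.dist_eq_one_iff_adj.1 h0
    calc (gball G x (2 ^ 0)).ncard ≤ (insert x (G.neighborSet x)).ncard :=
          Set.ncard_le_ncard hsub (Set.toFinite _)
      _ ≤ (G.neighborSet x).ncard + 1 := Set.ncard_insert_le _ _
      _ ≤ d + 1 := by have := hd x; omega
      _ = (d + 1) * D ^ 0 := by ring
  | succ t ih =>
    have h2 : (2 : ℕ) ^ (t + 1) = 2 * 2 ^ t := by ring
    rw [h2]
    calc (gball G x (2 * 2 ^ t)).ncard ≤ D * (gball G x (2 ^ t)).ncard :=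
          hD x (2 ^ t) Nat.one_le_two_pow
      _ ≤ D * ((d + 1) * D ^ t) := Nat.mul_le_mul_left _ ih
      _ = (d + 1) * D ^ (t + 1) := by ring

/-- Binomial-type bound. -/
lemma pow_succ_lower (m : ℕ) : ∀ N : ℕ, m ^ N * (m + N + 1) ≤ (m + 1) ^ (N + 1) := by
  intro N; induction N with
  | zero => simp
  | succ N ih =>
    calc m ^ (N + 1) * (m + (N + 1) + 1) ≤ m ^ N * (m + N + 1) * (m + 1) := by
          have h : m * (m + (N + 1) + 1) ≤ (m + N + 1) * (m + 1) := by nlinarith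
          calc m ^ (N + 1) * (m + (N + 1) + 1) = m ^ N * (m * (m + (N + 1) + 1)) := by ring
            _ ≤ m ^ N * ((m + N + 1) * (m + 1)) := Nat.mul_le_mul_left _ h
            _ = m ^ N * (m + N + 1) * (m + 1) := by ring
      _ ≤ (m + 1) ^ (N + 1) * (m + 1) := Nat.mul_le_mul_right _ ih
      _ = (m + 1) ^ (N + 2) := by ring

/-- Existence of the scale `t`: exponential beats polynomial. -/
lemma exists_t (d D m : ℕ) (hm : 1 ≤ m) :
    ∃ t : ℕ, m ^ (2 ^ t) * ((d + 1) * D ^ t) < (m + 1) ^ (2 ^ t) := by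
  set E : ℕ := max (d + 1) D + 1 with hE
  have hE2 : 2 ≤ E := by
    have : 1 ≤ max (d + 1) D := le_trans (Nat.le_add_left 1 d) (le_max_left _ _)
    omega
  have hEd : d + 1 < E := by
    have := le_max_left (d + 1) D; omega
  have hED : D < E := by
    have := le_max_right (d + 1) D; omega
  set c : ℕ := m * E with hc
  have hcpow : c ≤ 2 ^ c := Nat.le_of_lt (Nat.lt_two_pow_self (n := c))
  -- base: m ^ (2^c) * E ≤ (m+1) ^ (2^c)
  have base : m ^ (2 ^ c) * E ≤ (m + 1) ^ (2 ^ c) := by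
    have h1 : 1 ≤ 2 ^ c := Nat.one_le_two_pow
    obtain ⟨N, hN⟩ : ∃ N, 2 ^ c = N + 1 := ⟨2 ^ c - 1, by omega⟩
    rw [hN]
    have key := pow_succ_lower m N
    have hmE : m * E ≤ N + 1 := by rw [← hN]; exact hcpow
    calc m ^ (N + 1) * E = m ^ N * (m * E) := by ring
      _ ≤ m ^ N * (N + 1) := Nat.mul_le_mul_left _ (by omega)
      _ ≤ m ^ N * (m + N + 1) := Nat.mul_le_mul_left _ (by omega)
      _ ≤ (m + 1) ^ (N + 1) := key
  -- iterate squaring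
  have iter : ∀ k : ℕ, m ^ (2 ^ c * 2 ^ k) * E ^ (2 ^ k) ≤ (m + 1) ^ (2 ^ c * 2 ^ k) := by
    intro k; induction k with
    | zero => simpa using base
    | succ k ih =>
      have hsq : ∀ a b : ℕ, a ≤ b → a * a ≤ b * b := fun a b h => Nat.mul_le_mul h h
      have := hsq _ _ ih
      calc m ^ (2 ^ c * 2 ^ (k + 1)) * E ^ (2 ^ (k + 1))
          = (m ^ (2 ^ c * 2 ^ k) * E ^ (2 ^ k)) * (m ^ (2 ^ c * 2 ^ k) * E ^ (2 ^ k)) := by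
            rw [← pow_add, ← pow_add]; ring_nf
        _ ≤ (m + 1) ^ (2 ^ c * 2 ^ k) * (m + 1) ^ (2 ^ c * 2 ^ k) := this
        _ = (m + 1) ^ (2 ^ c * 2 ^ (k + 1)) := by rw [← pow_add]; ring_nf
  refine ⟨c + (c + 3), ?_⟩
  set k : ℕ := c + 3 with hk
  set t : ℕ := c + k with htdef
  have h2t : 2 ^ t = 2 ^ c * 2 ^ k := by rw [htdef, pow_add]
  have hkt : t + 2 ≤ 2 ^ k := by
    have h8 : 8 * (c + 1) ≤ 2 ^ k := by
      have : c + 1 ≤ 2 ^ c := by have := Nat.lt_two_pow_self (n := c); omega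
      calc 8 * (c + 1) ≤ 8 * 2 ^ c := by omega
        _ = 2 ^ k := by rw [hk]; ring
    omega
  have hstep : (d + 1) * D ^ t < E ^ (2 ^ k) := by
    have h1 : (d + 1) * D ^ t < E * E ^ t := by
      have hDt : D ^ t ≤ E ^ t := Nat.pow_le_pow_left (le_of_lt hED) t
      have hEt : 0 < E ^ t := Nat.pow_pos (by omega)
      calc (d + 1) * D ^ t ≤ (d + 1) * E ^ t := Nat.mul_le_mul_left _ hDt
        _ < E * E ^ t := (Nat.mul_lt_mul_right hEt).2 hEd
    have h2 : E * E ^ t = E ^ (t + 1) := by ring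
    have h3 : E ^ (t + 1) ≤ E ^ (2 ^ k) := Nat.pow_le_pow_right (by omega) (by omega)
    omega
  have hmpos : 0 < m ^ (2 ^ t) := Nat.pow_pos (by omega)
  calc m ^ (2 ^ t) * ((d + 1) * D ^ t) < m ^ (2 ^ t) * E ^ (2 ^ k) :=
        (Nat.mul_lt_mul_left hmpos).2 hstep
    _ ≤ (m + 1) ^ (2 ^ t) := by rw [h2t]; exact iter k


/-- Restriction of a graph to a finite vertex set. -/
def rGraph (G : SimpleGraph (Fin n)) (P : Finset (Fin n)) : SimpleGraph (Fin n) where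
  Adj v w := G.Adj v w ∧ v ∈ P ∧ w ∈ P
  symm := ⟨fun v w ⟨h, hv, hw⟩ => ⟨h.symm, hw, hv⟩⟩
  loopless := ⟨fun v ⟨h, _⟩ => G.loopless.irrefl v h⟩

/-- Cut edges: edges of `G` inside `R` missing from `G'`. -/
noncomputable def cutF (G : SimpleGraph (Fin n)) (R : Finset (Fin n))
    (G' : SimpleGraph (Fin n)) : Finset (Sym2 (Fin n)) :=
  G.edgeFinset.filter (fun e => (∀ v ∈ e, v ∈ R) ∧ e ∉ G'.edgeSet)

lemma mem_cutF {G G' : SimpleGraph (Fin n)} {R : Finset (Fin n)} {e : Sym2 (Fin n)} :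
    e ∈ cutF G R G' ↔ e ∈ G.edgeSet ∧ (∀ v ∈ e, v ∈ R) ∧ e ∉ G'.edgeSet := by
  simp [cutF, and_assoc]

lemma walk_in {V : Type*} {G' : SimpleGraph V} {P : Set V}
    (h1 : ∀ a b, G'.Adj a b → (a ∈ P ↔ b ∈ P)) :
    ∀ v w : V, G'.Walk v w → v ∈ P → w ∈ P := by
  intro v w p
  induction p with
  | nil => exact id
  | cons h _ ih => exact fun hv => ih ((h1 _ _ h).1 hv)

lemma walk_out {V : Type*} {G' G'' : SimpleGraph V} {P : Set V}
    (h1 : ∀ a b, G'.Adj a b → (a ∈ P ∧ b ∈ P) ∨ G''.Adj a b)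
    (h2 : ∀ a b, G''.Adj a b → b ∉ P) :
    ∀ v w : V, G'.Walk v w → v ∉ P → G''.Reachable v w := by
  intro v w p
  induction p with
  | nil => exact fun _ => SimpleGraph.Reachable.refl _
  | cons h _ ih =>
    intro hv
    rcases h1 _ _ h with ⟨hp, _⟩ | hg
    · exact absurd hp hv
    · exact hg.reachable.trans (ih (h2 _ _ hg))

lemma exists_good_r {d D : ℕ} (G : SimpleGraph (Fin n))
    (hd : ∀ v, (G.neighborSet v).ncard ≤ d)
    (hD : ∀ (x : Fin n) (s : ℕ), 1 ≤ s →
      (gball G x (2 * s)).ncard ≤ D * (gball G x s).ncard)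
    (m t : ℕ) (ht : m ^ (2 ^ t) * ((d + 1) * D ^ t) < (m + 1) ^ (2 ^ t))
    (R : Finset (Fin n)) (x : Fin n) :
    ∃ r < 2 ^ t, m * (ballB G R x (r + 1)).card ≤ (m + 1) * (ballB G R x r).card := by
  by_contra hcon
  push_neg at hcon
  have grow : ∀ r, r ≤ 2 ^ t → (m + 1) ^ r ≤ m ^ r * (ballB G R x r).card := by
    intro r
    induction r with
    | zero => intro _; simp [ballB]
    | succ r ih =>
      intro hr
      have h1 := ih (by omega)
      have h2 := hcon r (by omega)
      calc (m + 1) ^ (r + 1) = (m + 1) ^ r * (m + 1) := by ring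
        _ ≤ m ^ r * (ballB G R x r).card * (m + 1) := Nat.mul_le_mul_right _ h1
        _ = m ^ r * ((m + 1) * (ballB G R x r).card) := by ring
        _ ≤ m ^ r * (m * (ballB G R x (r + 1)).card) :=
            Nat.mul_le_mul_left _ (le_of_lt h2)
        _ = m ^ (r + 1) * (ballB G R x (r + 1)).card := by ring
  have h1 := grow (2 ^ t) le_rfl
  have h2 : (ballB G R x (2 ^ t)).card ≤ (gball G x (2 ^ t)).ncard := by
    have hsub : (↑(ballB G R x (2 ^ t)) : Set (Fin n)) ⊆ gball G x (2 ^ t) :=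
      fun y hy => ballB_mem_gball hy
    calc (ballB G R x (2 ^ t)).card = (↑(ballB G R x (2 ^ t)) : Set (Fin n)).ncard :=
          (Set.ncard_coe_finset _).symm
      _ ≤ (gball G x (2 ^ t)).ncard := Set.ncard_le_ncard hsub (Set.toFinite _)
  have h3 := gball_pow G hd hD x t
  have h4 : (m + 1) ^ (2 ^ t) ≤ m ^ (2 ^ t) * ((d + 1) * D ^ t) := by
    calc (m + 1) ^ (2 ^ t) ≤ m ^ (2 ^ t) * (ballB G R x (2 ^ t)).card := h1
      _ ≤ m ^ (2 ^ t) * ((d + 1) * D ^ t) := Nat.mul_le_mul_left _ (by omega)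
  omega

lemma main_induction {d D : ℕ} (G : SimpleGraph (Fin n))
    (hd : ∀ v, (G.neighborSet v).ncard ≤ d)
    (hD : ∀ (x : Fin n) (s : ℕ), 1 ≤ s →
      (gball G x (2 * s)).ncard ≤ D * (gball G x s).ncard)
    (m t : ℕ) (hm : 1 ≤ m) (ht : m ^ (2 ^ t) * ((d + 1) * D ^ t) < (m + 1) ^ (2 ^ t)) :
    ∀ R : Finset (Fin n), ∃ G' : SimpleGraph (Fin n),
      (∀ v w, G'.Adj v w → G.Adj v w ∧ v ∈ R ∧ w ∈ R) ∧
      m * (cutF G R G').card ≤ d * R.card ∧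
      (∀ v : Fin n, {w | G'.Reachable v w}.ncard ≤ (d + 1) * D ^ t + 1) := by
  intro R
  induction R using Finset.strongInduction with
  | _ R ih =>
  rcases R.eq_empty_or_nonempty with rfl | ⟨x, hx⟩
  · refine ⟨⊥, by simp, ?_, ?_⟩
    · have : cutF G ∅ ⊥ = ∅ := by
        apply Finset.eq_empty_of_forall_notMem
        intro e he
        rw [mem_cutF] at he
        induction e using Sym2.ind with
        | _ a b => exact absurd (he.2.1 a (by simp)) (by simp)
      simp [this]
    · intro v
      have : {w | (⊥ : SimpleGraph (Fin n)).Reachable v w} = {v} := by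
        ext w; simp [SimpleGraph.reachable_bot, eq_comm]
      rw [this, Set.ncard_singleton]
      omega
  · obtain ⟨r, hrlt, hgood⟩ := exists_good_r G hd hD m t ht R x
    set P : Finset (Fin n) := ballB G R x r with hP
    have hPR : P ⊆ R := ballB_subset G R x hx r
    have hxP : x ∈ P := mem_ballB_self G R x r
    have hss : R \ P ⊂ R := Finset.sdiff_ssubset hPR ⟨x, hxP⟩
    obtain ⟨G'', hadj'', hcut'', hcomp''⟩ := ih (R \ P) hss
    set H : SimpleGraph (Fin n) := G'' ⊔ rGraph G P with hH
    have hHadj : ∀ a b, H.Adj a b ↔ G''.Adj a b ∨ (G.Adj a b ∧ a ∈ P ∧ b ∈ P) := by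
      intro a b; rw [hH, SimpleGraph.sup_adj]; rfl
    have hadjH : ∀ v w, H.Adj v w → G.Adj v w ∧ v ∈ R ∧ w ∈ R := by
      intro v w hvw
      rcases (hHadj v w).1 hvw with hg | ⟨hg, hv, hw⟩
      · obtain ⟨h1, h2, h3⟩ := hadj'' v w hg
        exact ⟨h1, (Finset.mem_sdiff.1 h2).1, (Finset.mem_sdiff.1 h3).1⟩
      · exact ⟨hg, hPR hv, hPR hw⟩
    refine ⟨H, hadjH, ?_, ?_⟩
    · -- cut bound
      set Bd : Finset (Fin n) := ballB G R x (r + 1) \ P with hBd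
      set mixed : Finset (Sym2 (Fin n)) :=
        Bd.biUnion (fun w => (Finset.univ.filter (fun v => G.Adj w v)).image
          (fun v => s(v, w))) with hmixed
      have hsub : cutF G R H ⊆ cutF G (R \ P) G'' ∪ mixed := by
        intro e
        induction e using Sym2.ind with
        | _ a b =>
        intro he
        rw [mem_cutF] at he
        obtain ⟨heG, hall, hnot⟩ := he
        have hab : G.Adj a b := (G.mem_edgeSet).1 heG
        have haR : a ∈ R := hall a (by simp)
        have hbR : b ∈ R := hall b (by simp)
        rw [SimpleGraph.mem_edgeSet, hHadj] at hnot
        push_neg at hnot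
        obtain ⟨hn1, hn2⟩ := hnot
        by_cases haP : a ∈ P <;> by_cases hbP : b ∈ P
        · exact absurd hbP (hn2 hab haP)
        · refine Finset.mem_union_right _ (Finset.mem_biUnion.2 ⟨b, ?_, ?_⟩)
          · exact Finset.mem_sdiff.2 ⟨adj_mem_ballB haP hbR hab, hbP⟩
          · exact Finset.mem_image.2 ⟨a, Finset.mem_filter.2 ⟨Finset.mem_univ _, hab.symm⟩, rfl⟩
        · refine Finset.mem_union_right _ (Finset.mem_biUnion.2 ⟨a, ?_, ?_⟩)
          · exact Finset.mem_sdiff.2 ⟨adj_mem_ballB hbP haR hab.symm, haP⟩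
          · exact Finset.mem_image.2 ⟨b, Finset.mem_filter.2 ⟨Finset.mem_univ _, hab⟩,
              Sym2.eq_swap⟩
        · refine Finset.mem_union_left _ ?_
          rw [mem_cutF]
          refine ⟨heG, ?_, ?_⟩
          · intro v hv
            rcases Sym2.mem_iff.1 hv with rfl | rfl
            · exact Finset.mem_sdiff.2 ⟨haR, haP⟩
            · exact Finset.mem_sdiff.2 ⟨hbR, hbP⟩
          · rw [SimpleGraph.mem_edgeSet]; exact hn1
      have hdeg : ∀ w : Fin n, (Finset.univ.filter (fun v => G.Adj w v)).card ≤ d := by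
        intro w
        have hs : (↑(Finset.univ.filter (fun v => G.Adj w v)) : Set (Fin n)) =
            G.neighborSet w := by
          ext v; simp [SimpleGraph.mem_neighborSet]
        calc (Finset.univ.filter (fun v => G.Adj w v)).card
            = (↑(Finset.univ.filter (fun v => G.Adj w v)) : Set (Fin n)).ncard :=
              (Set.ncard_coe_finset _).symm
          _ = (G.neighborSet w).ncard := by rw [hs]
          _ ≤ d := hd w
      have hmixedcard : mixed.card ≤ Bd.card * d := by
        calc mixed.card ≤ ∑ w ∈ Bd, ((Finset.univ.filter (fun v => G.Adj w v)).image
              (fun v => s(v, w))).card := Finset.card_biUnion_le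
          _ ≤ ∑ w ∈ Bd, d := Finset.sum_le_sum (fun w _ =>
              le_trans Finset.card_image_le (hdeg w))
          _ = Bd.card * d := by rw [Finset.sum_const, smul_eq_mul]
      have hBdcard : Bd.card = (ballB G R x (r + 1)).card - P.card :=
        Finset.card_sdiff_of_subset (ballB_subset_succ G R x r)
      have hPle : P.card ≤ (ballB G R x (r + 1)).card :=
        Finset.card_le_card (ballB_subset_succ G R x r)
      have hmBd : m * Bd.card ≤ P.card := by
        have h1 : m * (ballB G R x (r + 1)).card ≤ m * P.card + P.card := by
          nlinarith [hgood]
        rw [hBdcard]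
        have h2 : m * ((ballB G R x (r + 1)).card - P.card) + m * P.card
            = m * (ballB G R x (r + 1)).card := by
          rw [← Nat.mul_add, Nat.sub_add_cancel hPle]
        omega
      have hcards : (R \ P).card + P.card = R.card := by
        rw [Finset.card_sdiff_of_subset hPR]
        have := Finset.card_le_card hPR
        omega
      calc m * (cutF G R H).card ≤ m * ((cutF G (R \ P) G'').card + mixed.card) :=
            Nat.mul_le_mul_left _ (le_trans (Finset.card_le_card hsub)
              (Finset.card_union_le _ _))
        _ = m * (cutF G (R \ P) G'').card + m * mixed.card := by ring
        _ ≤ d * (R \ P).card + m * (Bd.card * d) := by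
            have := Nat.mul_le_mul_left m hmixedcard
            omega
        _ = d * (R \ P).card + d * (m * Bd.card) := by ring
        _ ≤ d * (R \ P).card + d * P.card := by
            have := Nat.mul_le_mul_left d hmBd
            omega
        _ = d * R.card := by rw [← Nat.mul_add, hcards]
    · -- component bound
      intro v
      have hKP : P.card ≤ (d + 1) * D ^ t := by
        have hsub : (↑P : Set (Fin n)) ⊆ gball G x (2 ^ t) := by
          intro y hy
          exact gball_mono G x (by omega) (ballB_mem_gball hy)
        calc P.card = (↑P : Set (Fin n)).ncard := (Set.ncard_coe_finset _).symm
          _ ≤ (gball G x (2 ^ t)).ncard := Set.ncard_le_ncard hsub (Set.toFinite _)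
          _ ≤ (d + 1) * D ^ t := gball_pow G hd hD x t
      by_cases hv : v ∈ P
      · have hsub : {w | H.Reachable v w} ⊆ (↑P : Set (Fin n)) := by
          intro w hw
          obtain ⟨p⟩ := hw
          refine walk_in (P := (↑P : Set (Fin n))) ?_ v w p hv
          intro a b hab
          rcases (hHadj a b).1 hab with hg | ⟨_, ha, hb⟩
          · obtain ⟨_, h2, h3⟩ := hadj'' a b hg
            simp only [Finset.coe_mem, Finset.mem_coe]
            exact iff_of_false (Finset.mem_sdiff.1 h2).2 (Finset.mem_sdiff.1 h3).2
          · exact iff_of_true ha hb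
        calc {w | H.Reachable v w}.ncard ≤ (↑P : Set (Fin n)).ncard :=
              Set.ncard_le_ncard hsub (Set.toFinite _)
          _ = P.card := Set.ncard_coe_finset _
          _ ≤ (d + 1) * D ^ t + 1 := by omega
      · have hsub : {w | H.Reachable v w} ⊆ {w | G''.Reachable v w} := by
          intro w hw
          obtain ⟨p⟩ := hw
          refine walk_out (P := (↑P : Set (Fin n))) ?_ ?_ v w p hv
          · intro a b hab
            rcases (hHadj a b).1 hab with hg | ⟨_, ha, hb⟩
            · exact Or.inr hg
            · exact Or.inl ⟨ha, hb⟩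
          · intro a b hab
            obtain ⟨_, _, h3⟩ := hadj'' a b hab
            exact (Finset.mem_sdiff.1 h3).2
        exact le_trans (Set.ncard_le_ncard hsub (Set.toFinite _)) (hcomp'' v)

end DoublingHyp

theorem doubling_finite_graphs_hyperfinite (d D : ℕ) :
    ∀ ε : ℝ, 0 < ε → ∃ K : ℕ, ∀ n (G : SimpleGraph (Fin n)),
      (∀ v, (G.neighborSet v).ncard ≤ d) →
      (∀ (x : Fin n) (s : ℕ), 1 ≤ s →
        (gball G x (2 * s)).ncard ≤ D * (gball G x s).ncard) →
      ∃ G' : SimpleGraph (Fin n), G' ≤ G ∧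
        ((G.edgeSet \ G'.edgeSet).ncard : ℝ) ≤ ε * (n : ℝ) ∧
        (∀ v : Fin n, {w | G'.Reachable v w}.ncard ≤ K) := by
  intro ε hε
  set m : ℕ := max 1 (Nat.ceil ((d : ℝ) / ε)) with hmdef
  have hm : 1 ≤ m := le_max_left _ _
  have hdm : (d : ℝ) ≤ ε * m := by
    have h1 : (d : ℝ) / ε ≤ (Nat.ceil ((d : ℝ) / ε) : ℝ) := Nat.le_ceil _
    have h2 : ((Nat.ceil ((d : ℝ) / ε) : ℕ) : ℝ) ≤ (m : ℝ) := by
      exact_mod_cast Nat.cast_le.2 (le_max_right _ _)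
    have h3 : (d : ℝ) / ε ≤ (m : ℝ) := h1.trans h2
    calc (d : ℝ) = ((d : ℝ) / ε) * ε := by field_simp
      _ ≤ (m : ℝ) * ε := mul_le_mul_of_nonneg_right h3 (le_of_lt hε)
      _ = ε * m := by ring
  obtain ⟨t, ht⟩ := DoublingHyp.exists_t d D m hm
  refine ⟨(d + 1) * D ^ t + 1, ?_⟩
  intro n G hd hD
  obtain ⟨G', hadj, hcut, hcomp⟩ :=
    DoublingHyp.main_induction G hd hD m t hm ht Finset.univ
  refine ⟨G', fun v w h => (hadj v w h).1, ?_, hcomp⟩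
  have hset : (G.edgeSet \ G'.edgeSet) = ↑(DoublingHyp.cutF G Finset.univ G') := by
    ext e
    simp only [Set.mem_diff, Finset.coe_filter, DoublingHyp.mem_cutF, Finset.mem_coe]
    constructor
    · rintro ⟨h1, h2⟩; exact ⟨h1, fun v _ => Finset.mem_univ v, h2⟩
    · rintro ⟨h1, _, h2⟩; exact ⟨h1, h2⟩
  have hncard : (G.edgeSet \ G'.edgeSet).ncard = (DoublingHyp.cutF G Finset.univ G').card := by
    rw [hset, Set.ncard_coe_finset]
  rw [hncard]
  have hcard : (Finset.univ : Finset (Fin n)).card = n := by simp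
  rw [hcard] at hcut
  set c : ℕ := (DoublingHyp.cutF G Finset.univ G').card with hc
  have hmpos : (0 : ℝ) < (m : ℝ) := by exact_mod_cast hm
  have hkey : (m : ℝ) * c ≤ (m : ℝ) * (ε * n) := by
    calc (m : ℝ) * c ≤ (d : ℝ) * n := by exact_mod_cast hcut
      _ ≤ (ε * m) * n := mul_le_mul_of_nonneg_right hdm (Nat.cast_nonneg n)
      _ = (m : ℝ) * (ε * n) := by ring
  exact le_of_mul_le_mul_left hkey hmpos
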